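/- Let A and B be finitely generated commutative ℤ-algebras such that A ⊗_ℤ ℚ and B ⊗_ℤ ℚ are isomorphic as ℚ-algebras. Then for all sufficiently large primes p, the number of ring homomorphisms from A to the field ℤ/pℤ equals the number of ring homomorphisms from B to ℤ/pℤ (both numbers being finite). -/

import Mathlib

open TensorProduct

section Aux

variable (A : Type) [CommRing A]

/-- The canonical map `A → ℚ ⊗ A`. -/
noncomputable def qmap : A →ₐ[ℤ] ℚ ⊗[ℤ] A := Algebra.TensorProduct.includeRight

lemma qmap_apply (a : A) : qmap A a = (1 : ℚ) ⊗ₜ[ℤ] a := rfl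

/-- The subalgebra `A[1/N]` of `ℚ ⊗ A`. -/
noncomputable def Tn (N : ℕ) : Subalgebra ℤ (ℚ ⊗[ℤ] A) :=
  Algebra.adjoin ℤ
    (Set.range (fun a : A => (1 : ℚ) ⊗ₜ[ℤ] a) ∪ {((N : ℚ)⁻¹) ⊗ₜ[ℤ] (1 : A)})

lemma tmul_mem_Tn (N : ℕ) (a : A) : (1 : ℚ) ⊗ₜ[ℤ] a ∈ Tn A N :=
  Algebra.subset_adjoin (Or.inl ⟨a, rfl⟩)

lemma inv_mem_Tn (N : ℕ) : ((N : ℚ)⁻¹) ⊗ₜ[ℤ] (1 : A) ∈ Tn A N :=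
  Algebra.subset_adjoin (Or.inr rfl)

lemma rat_tmul_one (q : ℚ) :
    q ⊗ₜ[ℤ] (1 : A) = algebraMap ℚ (ℚ ⊗[ℤ] A) q := by
  rw [Algebra.TensorProduct.algebraMap_apply]
  norm_num

lemma natCast_eq_tmul (N : ℕ) :
    (N : ℚ ⊗[ℤ] A) = (N : ℚ) ⊗ₜ[ℤ] (1 : A) := by
  rw [rat_tmul_one, map_natCast]

lemma inv_mul_natCast (N : ℕ) (hN : 0 < N) :
    (((N : ℚ)⁻¹) ⊗ₜ[ℤ] (1 : A)) * (N : ℚ ⊗[ℤ] A) = 1 := by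
  rw [natCast_eq_tmul, Algebra.TensorProduct.tmul_mul_tmul, one_mul,
    inv_mul_cancel₀ (by exact_mod_cast hN.ne')]
  rfl

lemma Tn_mono {n m : ℕ} (hnm : n ∣ m) (hm : 0 < m) : Tn A n ≤ Tn A m := by
  apply Algebra.adjoin_le
  rintro x (hx | rfl)
  · exact Algebra.subset_adjoin (Or.inl hx)
  · obtain ⟨k, rfl⟩ := hnm
    rcases Nat.eq_zero_or_pos n with rfl | hn
    · simp at hm
    have hk : 0 < k := Nat.pos_of_ne_zero (by rintro rfl; simp at hm)
    have key : (n : ℚ)⁻¹ = (k : ℤ) • ((n * k : ℕ) : ℚ)⁻¹ := by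
      push_cast
      rw [zsmul_eq_mul]
      push_cast
      rw [mul_inv]
      field_simp
    have heq : (n : ℚ)⁻¹ ⊗ₜ[ℤ] (1 : A)
        = (k : ℤ) • (((n * k : ℕ) : ℚ)⁻¹ ⊗ₜ[ℤ] (1 : A)) := by
      rw [TensorProduct.smul_tmul', ← key]
    rw [heq]
    exact Subalgebra.smul_mem _ (inv_mem_Tn A _) _

lemma exists_mem_Tn (x : ℚ ⊗[ℤ] A) : ∃ N : ℕ, 0 < N ∧ x ∈ Tn A N := by
  induction x using TensorProduct.induction_on with
  | zero => exact ⟨1, one_pos, zero_mem _⟩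
  | tmul q a =>
      refine ⟨q.den, q.pos, ?_⟩
      have : q ⊗ₜ[ℤ] a =
          q.num • ((((q.den : ℚ)⁻¹) ⊗ₜ[ℤ] (1 : A)) * ((1 : ℚ) ⊗ₜ[ℤ] a)) := by
        rw [Algebra.TensorProduct.tmul_mul_tmul, mul_one, one_mul,
          TensorProduct.smul_tmul']
        congr 1
        rw [zsmul_eq_mul, ← div_eq_mul_inv]
        exact_mod_cast (Rat.num_div_den q).symm
      rw [this]
      exact Subalgebra.smul_mem _ (mul_mem (inv_mem_Tn A _) (tmul_mem_Tn A _ a)) _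
  | add x y hx hy =>
      obtain ⟨Nx, hNx, hx⟩ := hx
      obtain ⟨Ny, hNy, hy⟩ := hy
      exact ⟨Nx * Ny, mul_pos hNx hNy,
        add_mem (Tn_mono A (dvd_mul_right _ _) (mul_pos hNx hNy) hx)
          (Tn_mono A (dvd_mul_left _ _) (mul_pos hNx hNy) hy)⟩

lemma Tn_surj (N : ℕ) (hN : 0 < N) :
    ∀ z ∈ Tn A N, ∃ k : ℕ, z * (N : ℚ ⊗[ℤ] A) ^ k ∈ (qmap A).range := by
  intro z hz
  induction hz using Algebra.adjoin_induction with
  | mem x hx =>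
      rcases hx with ⟨a, rfl⟩ | rfl
      · refine ⟨0, ?_⟩
        rw [pow_zero, mul_one]
        exact ⟨a, rfl⟩
      · refine ⟨1, ?_⟩
        rw [pow_one, inv_mul_natCast A N hN]
        exact one_mem _
  | algebraMap r =>
      refine ⟨0, ?_⟩
      rw [pow_zero, mul_one]
      exact Subalgebra.algebraMap_mem _ r
  | add x y hx hy hx' hy' =>
      obtain ⟨k, hk⟩ := hx'
      obtain ⟨l, hl⟩ := hy'
      refine ⟨k + l, ?_⟩
      have : (x + y) * (N : ℚ ⊗[ℤ] A) ^ (k + l) =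
          (x * (N : ℚ ⊗[ℤ] A) ^ k) * (N : ℚ ⊗[ℤ] A) ^ l +
          (y * (N : ℚ ⊗[ℤ] A) ^ l) * (N : ℚ ⊗[ℤ] A) ^ k := by ring
      rw [this]
      exact add_mem (mul_mem hk (pow_mem (Subalgebra.natCast_mem _ N) l))
        (mul_mem hl (pow_mem (Subalgebra.natCast_mem _ N) k))
  | mul x y hx hy hx' hy' =>
      obtain ⟨k, hk⟩ := hx'
      obtain ⟨l, hl⟩ := hy'
      refine ⟨k + l, ?_⟩
      have : (x * y) * (N : ℚ ⊗[ℤ] A) ^ (k + l) =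
          (x * (N : ℚ ⊗[ℤ] A) ^ k) * (y * (N : ℚ ⊗[ℤ] A) ^ l) := by ring
      rw [this]
      exact mul_mem hk hl

/-- A bound on the ℤ-torsion of a finitely generated ℤ-algebra. -/
lemma exists_torsion_bound (hA : Algebra.FiniteType ℤ A) :
    ∃ M : ℤ, M ≠ 0 ∧ ∀ a : A, (1 : ℚ) ⊗ₜ[ℤ] a = 0 → M • a = 0 := by
  classical
  haveI := hA
  haveI : IsNoetherianRing A := Algebra.FiniteType.isNoetherianRing ℤ A
  set f : A →ₗ[ℤ] ℚ ⊗[ℤ] A := TensorProduct.mk ℤ ℚ A 1 with hf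
  haveI : IsLocalizedModule (nonZeroDivisors ℤ) f :=
    (isLocalizedModule_iff_isBaseChange (nonZeroDivisors ℤ) ℚ f).mpr
      (TensorProduct.isBaseChange ℤ A ℚ)
  have hker : ∀ a : A, (1 : ℚ) ⊗ₜ[ℤ] a = 0 → ∃ m : ℤ, m ≠ 0 ∧ m • a = 0 := by
    intro a ha
    have : f a = 0 := ha
    obtain ⟨s, hs⟩ := (IsLocalizedModule.eq_zero_iff (nonZeroDivisors ℤ) f).mp this
    exact ⟨s.1, nonZeroDivisors.coe_ne_zero s, hs⟩
  set K : Ideal A := RingHom.ker (qmap A).toRingHom with hK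
  obtain ⟨s, hs⟩ := (isNoetherianRing_iff_ideal_fg A).mp ‹IsNoetherianRing A› K
  have hmem : ∀ x : {x // x ∈ s}, ∃ m : ℤ, m ≠ 0 ∧ m • (x : A) = 0 := by
    intro x
    apply hker
    have hx : (x : A) ∈ K := hs ▸ Ideal.subset_span x.2
    simpa [hK, RingHom.mem_ker, qmap_apply] using hx
  choose m hm0 hm using hmem
  refine ⟨∏ x ∈ s.attach, m x, Finset.prod_ne_zero_iff.mpr fun x _ => hm0 x, ?_⟩
  intro a ha
  have haK : a ∈ K := by
    simp only [hK, RingHom.mem_ker]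
    simpa [qmap_apply] using ha
  set J : Ideal A :=
    { carrier := {a : A | (∏ x ∈ s.attach, m x) • a = 0}
      add_mem' := by
        intro x y hx hy
        simp only [Set.mem_setOf_eq] at *
        rw [smul_add, hx, hy, add_zero]
      zero_mem' := by simp
      smul_mem' := by
        intro c x hx
        simp only [Set.mem_setOf_eq] at *
        rw [smul_eq_mul, ← mul_smul_comm, hx, mul_zero] } with hJ
  have hsJ : (s : Set A) ⊆ J := by
    intro x hx
    show (∏ y ∈ s.attach, m y) • x = 0
    have := Finset.mul_prod_erase s.attach m (Finset.mem_attach s ⟨x, hx⟩)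
    rw [← this, mul_comm, mul_smul, hm ⟨x, hx⟩, smul_zero]
  have : K ≤ J := hs ▸ Ideal.span_le.mpr hsJ
  exact this haK

end Aux

section HomEquiv

/-- Transfer ring homs along a surjection-with-controlled-kernel. -/
lemma homEquivRange (A : Type) [CommRing A] {R : Type} [CommRing R]
    (f : A →ₐ[ℤ] R) (M : ℤ) (p : ℕ)
    (hMp : IsUnit (M : ZMod p)) (hker : ∀ a, f a = 0 → M • a = 0) :
    Nonempty ((A →+* ZMod p) ≃ (↥f.range →+* ZMod p)) := by
  have const : ∀ (g : A →+* ZMod p) (a a' : A), f a = f a' → g a = g a' := by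
    intro g a a' hfa
    have h0 : M • (a - a') = 0 := hker _ (by rw [map_sub, hfa, sub_self])
    have h1 : (M : ZMod p) * (g a - g a') = 0 := by
      have := congrArg g h0
      rw [map_zsmul, map_zero, zsmul_eq_mul, map_sub] at this
      exact this
    have := (hMp.mul_right_eq_zero).mp h1
    exact sub_eq_zero.mp this
  have hsec : ∀ c : ↥f.range, ∃ a : A, f a = (c : R) := fun c => c.2
  choose sec hsecs using hsec
  refine ⟨{
    toFun := fun g =>
      { toFun := fun c => g (sec c)
        map_one' := by
          show g (sec 1) = 1
          have : f (sec 1) = f 1 := by rw [hsecs]; simp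
          rw [const g _ _ this, map_one]
        map_mul' := by
          intro c d
          show g (sec (c * d)) = g (sec c) * g (sec d)
          have : f (sec (c * d)) = f (sec c * sec d) := by
            rw [map_mul, hsecs, hsecs, hsecs]; rfl
          rw [const g _ _ this, map_mul]
        map_zero' := by
          show g (sec 0) = 0
          have : f (sec 0) = f 0 := by rw [hsecs]; simp
          rw [const g _ _ this, map_zero]
        map_add' := by
          intro c d
          show g (sec (c + d)) = g (sec c) + g (sec d)
          have : f (sec (c + d)) = f (sec c + sec d) := by
            rw [map_add, hsecs, hsecs, hsecs]; rfl
          rw [const g _ _ this, map_add] }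
    invFun := fun h => h.comp f.rangeRestrict.toRingHom
    left_inv := by
      intro g
      ext a
      simp only [RingHom.coe_mk, MonoidHom.coe_mk, OneHom.coe_mk, RingHom.coe_comp,
        Function.comp_apply]
      exact const g _ _ (by rw [hsecs]; rfl)
    right_inv := by
      intro h
      ext c
      simp only [RingHom.coe_comp, Function.comp_apply, RingHom.coe_mk, MonoidHom.coe_mk,
        OneHom.coe_mk]
      congr 1
      exact Subtype.ext (hsecs c) }⟩

/-- Transfer ring homs along inverting `N`, for `p ∤ N`. -/
lemma homEquivLoc {R : Type} [CommRing R] (C T : Subalgebra ℤ R) (hCT : C ≤ T) (N : ℕ)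
    (hu : ∃ u ∈ T, (N : R) * u = 1)
    (hsurj : ∀ z ∈ T, ∃ k : ℕ, z * (N : R) ^ k ∈ C)
    (p : ℕ) (hp : p.Prime) (hpN : ¬ p ∣ N) :
    Nonempty ((↥C →+* ZMod p) ≃ (↥T →+* ZMod p)) := by
  letI : Algebra ↥C ↥T := (Subalgebra.inclusion hCT).toRingHom.toAlgebra
  set x : ↥C := (N : ↥C) with hx
  have halg : ∀ c : ↥C, ((algebraMap ↥C ↥T c : ↥T) : R) = (c : R) := fun c => rfl
  haveI : IsLocalization (Submonoid.powers x) ↥T := by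
    refine ⟨?_, ?_, ?_⟩
    · rintro ⟨y, n, rfl⟩
      obtain ⟨u, huT, huN⟩ := hu
      have hunit : IsUnit (algebraMap ↥C ↥T x) := by
        refine IsUnit.of_mul_eq_one ⟨u, huT⟩ (Subtype.ext ?_)
        show ((algebraMap ↥C ↥T x : ↥T) : R) * u = 1
        rw [halg, hx]
        push_cast
        exact huN
      simpa only [map_pow] using hunit.pow n
    · intro z
      obtain ⟨k, hk⟩ := hsurj (z : R) z.2
      refine ⟨⟨⟨_, hk⟩, ⟨x ^ k, ⟨k, rfl⟩⟩⟩, Subtype.ext ?_⟩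
      show (z : R) * ((algebraMap ↥C ↥T (x ^ k) : ↥T) : R) = ((z : R) * (N : R) ^ k)
      rw [halg, hx]
      push_cast
      ring
    · intro c d hcd
      have : (c : R) = (d : R) := by
        have := congrArg (fun t : ↥T => (t : R)) hcd
        simpa only [halg] using this
      exact ⟨1, by rw [Subtype.ext this]⟩
  have hNunit : IsUnit ((N : ℕ) : ZMod p) :=
    (ZMod.isUnit_iff_coprime N p).mpr (Nat.Coprime.symm ((hp.coprime_iff_not_dvd).mpr hpN))
  have hunits : ∀ (g : ↥C →+* ZMod p) (y : Submonoid.powers x), IsUnit (g y) := by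
    rintro g ⟨y, n, rfl⟩
    have : g (x ^ n) = ((N : ZMod p)) ^ n := by
      rw [map_pow, hx, map_natCast]
    simpa only [this] using hNunit.pow n
  refine ⟨{
    toFun := fun g => IsLocalization.lift (M := Submonoid.powers x) (hunits g)
    invFun := fun h => h.comp (algebraMap ↥C ↥T)
    left_inv := fun g => IsLocalization.lift_comp _
    right_inv := fun h =>
      IsLocalization.ringHom_ext (Submonoid.powers x) (IsLocalization.lift_comp _) }⟩

/-- Finiteness of homs into `ZMod p`. -/
lemma finiteHom (A : Type) [CommRing A] (hA : Algebra.FiniteType ℤ A)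
    (p : ℕ) (hp : p.Prime) : Finite (A →+* ZMod p) := by
  haveI : NeZero p := ⟨hp.pos.ne'⟩
  obtain ⟨s, hs⟩ := hA.out
  have hinj : Function.Injective (fun (g : A →+* ZMod p) (a : s) => g (a : A)) := by
    intro g₁ g₂ hgg
    have heq : g₁.toIntAlgHom = g₂.toIntAlgHom := by
      have hle : Algebra.adjoin ℤ (s : Set A) ≤
          AlgHom.equalizer g₁.toIntAlgHom g₂.toIntAlgHom :=
        Algebra.adjoin_le fun a ha => congrFun hgg ⟨a, ha⟩
      rw [hs] at hle
      ext a
      exact hle (Algebra.mem_top (R := ℤ) (A := A))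
    exact RingHom.toIntAlgHom_injective heq
  exact Finite.of_injective _ hinj

end HomEquiv

/-- If two finitely generated `ℤ`-algebras become isomorphic after tensoring with `ℚ`,
then they have the same (finite) number of homomorphisms to `ℤ/pℤ` for all
sufficiently large primes `p`. -/
theorem card_hom_to_zmod_eventually_eq
    (A : Type) [CommRing A] (B : Type) [CommRing B]
    (hA : Algebra.FiniteType ℤ A) (hB : Algebra.FiniteType ℤ B)
    (h : Nonempty ((ℚ ⊗[ℤ] A) ≃ₐ[ℚ] (ℚ ⊗[ℤ] B))) :
    ∃ M : ℕ, ∀ p : ℕ, p.Prime → M ≤ p →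
      Finite (A →+* ZMod p) ∧ Finite (B →+* ZMod p) ∧
        Nat.card (A →+* ZMod p) = Nat.card (B →+* ZMod p) := by
  obtain ⟨φ⟩ := h
  obtain ⟨MA, hMA0, hMA⟩ := exists_torsion_bound A hA
  obtain ⟨MB, hMB0, hMB⟩ := exists_torsion_bound B hB
  obtain ⟨sA, hsA⟩ := hA.out
  obtain ⟨sB, hsB⟩ := hB.out
  choose NA hNA1 hNA2 using fun a : A => exists_mem_Tn B (φ ((1 : ℚ) ⊗ₜ[ℤ] a))
  choose NB hNB1 hNB2 using fun b : B => exists_mem_Tn A (φ.symm ((1 : ℚ) ⊗ₜ[ℤ] b))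
  set N : ℕ := (∏ a ∈ sA, NA a) * (∏ b ∈ sB, NB b) with hN
  have hNpos : 0 < N :=
    mul_pos (Finset.prod_pos fun a _ => hNA1 a) (Finset.prod_pos fun b _ => hNB1 b)
  -- the isomorphism maps Tn A N into Tn B N and conversely
  have hdvdA : ∀ a ∈ sA, NA a ∣ N := fun a ha =>
    (Finset.dvd_prod_of_mem NA ha).trans (dvd_mul_right _ _)
  have hdvdB : ∀ b ∈ sB, NB b ∣ N := fun b hb =>
    (Finset.dvd_prod_of_mem NB hb).trans (dvd_mul_left _ _)
  set φℤ : ℚ ⊗[ℤ] A →ₐ[ℤ] ℚ ⊗[ℤ] B := (φ.toAlgHom.restrictScalars ℤ) with hφℤ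
  set ψℤ : ℚ ⊗[ℤ] B →ₐ[ℤ] ℚ ⊗[ℤ] A := (φ.symm.toAlgHom.restrictScalars ℤ) with hψℤ
  have keyA : ∀ x ∈ Tn A N, φ x ∈ Tn B N := by
    have hgen : ∀ a : A, φ ((1 : ℚ) ⊗ₜ[ℤ] a) ∈ Tn B N := by
      have hsub : (⊤ : Subalgebra ℤ A) ≤
          Subalgebra.comap (qmap A) (Subalgebra.comap φℤ (Tn B N)) := by
        rw [← hsA]
        apply Algebra.adjoin_le
        intro a ha
        show φℤ (qmap A a) ∈ Tn B N
        have : φℤ (qmap A a) = φ ((1 : ℚ) ⊗ₜ[ℤ] a) := rfl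
        rw [this]
        exact Tn_mono B (hdvdA a ha) hNpos (hNA2 a)
      intro a
      exact hsub (Algebra.mem_top (R := ℤ)) (x := a)
    have := Algebra.adjoin_le (R := ℤ)
      (s := Set.range (fun a : A => (1 : ℚ) ⊗ₜ[ℤ] a) ∪ {((N : ℚ)⁻¹) ⊗ₜ[ℤ] (1 : A)})
      (S := Subalgebra.comap φℤ (Tn B N)) ?_
    · intro x hx
      exact this hx
    · rintro x (⟨a, rfl⟩ | rfl)
      · exact hgen a
      · show φℤ (((N : ℚ)⁻¹) ⊗ₜ[ℤ] (1 : A)) ∈ Tn B N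
        have h1 : φℤ (((N : ℚ)⁻¹) ⊗ₜ[ℤ] (1 : A)) = ((N : ℚ)⁻¹) ⊗ₜ[ℤ] (1 : B) := by
          rw [rat_tmul_one, rat_tmul_one]
          exact φ.commutes _
        rw [h1]
        exact inv_mem_Tn B N
  have keyB : ∀ y ∈ Tn B N, φ.symm y ∈ Tn A N := by
    have hgen : ∀ b : B, φ.symm ((1 : ℚ) ⊗ₜ[ℤ] b) ∈ Tn A N := by
      have hsub : (⊤ : Subalgebra ℤ B) ≤
          Subalgebra.comap (qmap B) (Subalgebra.comap ψℤ (Tn A N)) := by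
        rw [← hsB]
        apply Algebra.adjoin_le
        intro b hb
        show ψℤ (qmap B b) ∈ Tn A N
        have : ψℤ (qmap B b) = φ.symm ((1 : ℚ) ⊗ₜ[ℤ] b) := rfl
        rw [this]
        exact Tn_mono A (hdvdB b hb) hNpos (hNB2 b)
      intro b
      exact hsub (Algebra.mem_top (R := ℤ)) (x := b)
    have := Algebra.adjoin_le (R := ℤ)
      (s := Set.range (fun b : B => (1 : ℚ) ⊗ₜ[ℤ] b) ∪ {((N : ℚ)⁻¹) ⊗ₜ[ℤ] (1 : B)})
      (S := Subalgebra.comap ψℤ (Tn A N)) ?_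
    · intro y hy
      exact this hy
    · rintro y (⟨b, rfl⟩ | rfl)
      · exact hgen b
      · show ψℤ (((N : ℚ)⁻¹) ⊗ₜ[ℤ] (1 : B)) ∈ Tn A N
        have h1 : ψℤ (((N : ℚ)⁻¹) ⊗ₜ[ℤ] (1 : B)) = ((N : ℚ)⁻¹) ⊗ₜ[ℤ] (1 : A) := by
          rw [rat_tmul_one, rat_tmul_one]
          exact φ.symm.commutes _
        rw [h1]
        exact inv_mem_Tn A N
  -- the ring equivalence between Tn A N and Tn B N
  let e : ↥(Tn A N) ≃+* ↥(Tn B N) :=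
    { toFun := fun z => ⟨φ z, keyA z z.2⟩
      invFun := fun w => ⟨φ.symm w, keyB w w.2⟩
      left_inv := fun z => Subtype.ext (φ.symm_apply_apply z)
      right_inv := fun w => Subtype.ext (φ.apply_symm_apply w)
      map_mul' := fun z w => Subtype.ext (map_mul φ _ _)
      map_add' := fun z w => Subtype.ext (map_add φ _ _) }
  refine ⟨N * MA.natAbs * MB.natAbs + 1, ?_⟩
  intro p hp hpM
  haveI : Fact p.Prime := ⟨hp⟩
  have hposA : 0 < MA.natAbs := Int.natAbs_pos.mpr hMA0
  have hposB : 0 < MB.natAbs := Int.natAbs_pos.mpr hMB0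
  have hfac : ∀ k : ℕ, 0 < k → k ∣ N * MA.natAbs * MB.natAbs → ¬ p ∣ k := by
    intro k hk hkdvd hpk
    have h1 : p ≤ k := Nat.le_of_dvd hk hpk
    have h2 : k ≤ N * MA.natAbs * MB.natAbs :=
      Nat.le_of_dvd (by positivity) hkdvd
    omega
  have hpN : ¬ p ∣ N := hfac N hNpos ⟨MA.natAbs * MB.natAbs, by ring⟩
  have hpMA : ¬ p ∣ MA.natAbs := hfac MA.natAbs hposA ⟨N * MB.natAbs, by ring⟩
  have hpMB : ¬ p ∣ MB.natAbs := hfac MB.natAbs hposB ⟨N * MA.natAbs, by ring⟩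
  -- units
  have hUA : IsUnit ((MA : ZMod p)) := by
    rw [isUnit_iff_ne_zero]
    intro h0
    rw [ZMod.intCast_zmod_eq_zero_iff_dvd] at h0
    exact hpMA (Int.natAbs_dvd_natAbs.mpr (by exact_mod_cast h0))
  have hUB : IsUnit ((MB : ZMod p)) := by
    rw [isUnit_iff_ne_zero]
    intro h0
    rw [ZMod.intCast_zmod_eq_zero_iff_dvd] at h0
    exact hpMB (Int.natAbs_dvd_natAbs.mpr (by exact_mod_cast h0))
  -- the chain of equivalences
  obtain ⟨E1⟩ := homEquivRange A (qmap A) MA p hUA (fun a ha => hMA a (by exact ha))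
  obtain ⟨E5⟩ := homEquivRange B (qmap B) MB p hUB (fun b hb => hMB b (by exact hb))
  have hCTA : (qmap A).range ≤ Tn A N := by
    rintro x ⟨a, rfl⟩
    exact tmul_mem_Tn A N a
  have hCTB : (qmap B).range ≤ Tn B N := by
    rintro x ⟨b, rfl⟩
    exact tmul_mem_Tn B N b
  obtain ⟨E2⟩ := homEquivLoc ((qmap A).range) (Tn A N) hCTA N
    ⟨((N : ℚ)⁻¹) ⊗ₜ[ℤ] (1 : A), inv_mem_Tn A N, by
      rw [mul_comm]; exact inv_mul_natCast A N hNpos⟩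
    (Tn_surj A N hNpos) p hp hpN
  obtain ⟨E4⟩ := homEquivLoc ((qmap B).range) (Tn B N) hCTB N
    ⟨((N : ℚ)⁻¹) ⊗ₜ[ℤ] (1 : B), inv_mem_Tn B N, by
      rw [mul_comm]; exact inv_mul_natCast B N hNpos⟩
    (Tn_surj B N hNpos) p hp hpN
  let E3 : (↥(Tn A N) →+* ZMod p) ≃ (↥(Tn B N) →+* ZMod p) :=
    { toFun := fun f => f.comp e.symm.toRingHom
      invFun := fun f => f.comp e.toRingHom
      left_inv := fun f => by
        ext z
        simp
      right_inv := fun f => by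
        ext w
        simp }
  refine ⟨finiteHom A hA p hp, finiteHom B hB p hp, ?_⟩
  exact Nat.card_congr (((((E1.trans E2).trans E3).trans E4.symm).trans E5.symm))
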